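/- Let q ∈ [2,∞). There exists a constant c₁(q) > 0 depending only on q with the following property: whenever h₀, h₁ ∈ L¹((0,1);[0,∞)) and φ : (0,1) × ℝ → ℝ is measurable in the first variable, continuous in the second, and satisfies φ(r,ξ)·sign(ξ) ≤ h₀(r) + h₁(r)|ξ| for a.e. r ∈ (0,1) and all ξ ∈ ℝ, then for every ε > 0 and every continuously differentiable x : [0,1] → ℝ with x(0) = x(1) = 0 such that r ↦ φ(r,x(r)) x(r)|x(r)|^{q−2} is Lebesgue integrable: ∫₀¹ φ(r,x(r)) x(r)|x(r)|^{q−2} dr ≤ ε ∫₀¹ x'(r)² |x(r)|^{q−2} dr + c₁(q) ( ‖h₁‖₁² ε^{-1} + ‖h₀‖₁^{2q/(q+1)} ε^{-(q−1)/(q+1)} ) (1 + ‖x‖_q^q). -/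

import Mathlib

open Set MeasureTheory

lemma young2 {a b ε : ℝ} (hε : 0 < ε) : a * b ≤ ε/2 * a^2 + b^2/(2*ε) := by
  have h2ε : (0:ℝ) < 2*ε := by linarith
  have h : 2*ε*(a*b) ≤ ε^2*a^2 + b^2 := by nlinarith [sq_nonneg (ε*a - b)]
  calc a*b = (2*ε*(a*b))/(2*ε) := by field_simp
    _ ≤ (ε^2*a^2 + b^2)/(2*ε) := by gcongr
    _ = ε/2*a^2 + b^2/(2*ε) := by field_simp

/-- weighted Young inequality -/
lemma wyoung {p p' a b δ : ℝ} (hc : Real.HolderConjugate p p') (ha : 0 ≤ a) (hb : 0 ≤ b)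
    (hδ : 0 < δ) :
    a * b ≤ δ * a ^ p + (δ * p) ^ (-(p'/p)) / p' * b ^ p' := by
  have hp : 0 < p := hc.pos
  have hp' : 0 < p' := hc.symm.pos
  set c : ℝ := (δ * p) ^ (1/p) with hc_def
  have hcpos : 0 < c := Real.rpow_pos_of_pos (by positivity) _
  have key := Real.young_inequality_of_nonneg (a := c * a)
    (b := b / c) (by positivity) (by positivity) hc
  have hcp : c ^ p = δ * p := by
    rw [hc_def, ← Real.rpow_mul (by positivity : (0:ℝ) ≤ δ*p), one_div,
      inv_mul_cancel₀ hp.ne', Real.rpow_one]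
  have h1 : (c * a) ^ p = (δ * p) * a ^ p := by
    rw [Real.mul_rpow hcpos.le ha, hcp]
  have h2 : (b / c) ^ p' = (δ * p) ^ (-(p'/p)) * b ^ p' := by
    rw [div_eq_mul_inv, Real.mul_rpow hb (by positivity), ← Real.rpow_neg_one c,
      hc_def, ← Real.rpow_mul (by positivity : (0:ℝ) ≤ δ*p),
      ← Real.rpow_mul (by positivity : (0:ℝ) ≤ δ*p)]
    rw [show 1/p*-1*p' = -(p'/p) by field_simp]
    ring
  have hab : c * a * (b / c) = a * b := by field_simp
  rw [hab, h1, h2] at key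
  calc a * b ≤ δ * p * a ^ p / p + (δ * p) ^ (-(p'/p)) * b ^ p' / p' := key
    _ = δ * a ^ p + (δ * p) ^ (-(p'/p)) / p' * b ^ p' := by field_simp

lemma scalar_key (q : ℝ) (hq : 2 ≤ q) :
    ∃ c₁ : ℝ, 0 < c₁ ∧
      ∀ ε S T H₀ H₁ M L : ℝ, 0 < ε → 0 ≤ S → 0 ≤ T → 0 ≤ H₀ → 0 ≤ H₁ → 0 ≤ M →
        M ^ q ≤ q * S * T → L ≤ H₀ * M ^ (q-1) + H₁ * M ^ q →
        L ≤ ε * S^2 + c₁ * (H₁^2 * ε⁻¹ + H₀ ^ (2*q/(q+1)) * ε ^ (-(q-1)/(q+1))) * (1 + T^2) := by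
  have hq0 : 0 < q := by linarith
  have hq1 : 0 < q - 1 := by linarith
  set θ : ℝ := (q-1)/q with hθ_def
  set p : ℝ := 2*q/(q-1) with hp_def
  set p' : ℝ := 2*q/(q+1) with hp'_def
  set r : ℝ := (q-1)/(q+1) with hr_def
  have hp_pos : 0 < p := by positivity
  have hp'_pos : 0 < p' := by positivity
  have hr_pos : 0 < r := by positivity
  have hθ_pos : 0 < θ := by positivity
  have hconj : Real.HolderConjugate p p' := by
    rw [Real.holderConjugate_iff]; constructor
    · rw [hp_def]; rw [lt_div_iff₀ (by linarith)]; linarith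
    · rw [hp_def, hp'_def]; field_simp; ring
  have hrpp : p'/p = r := by rw [hp_def, hp'_def, hr_def]; field_simp
  set Cq : ℝ := (p/2) ^ (-r) / p' * q ^ (θ*p') with hCq_def
  have hCq_pos : 0 < Cq := by
    exact mul_pos (div_pos (Real.rpow_pos_of_pos (by positivity) _) hp'_pos)
      (Real.rpow_pos_of_pos hq0 _)
  refine ⟨max (q^2/2) Cq + 1, by positivity, ?_⟩
  intro ε S T H₀ H₁ M L hε hS hT hH₀ hH₁ hM hMq hL
  set c₁ : ℝ := max (q^2/2) Cq + 1 with hc₁_def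
  have hc₁a : q^2/2 ≤ c₁ := by
    calc q^2/2 ≤ max (q^2/2) Cq := le_max_left _ _
      _ ≤ c₁ := by rw [hc₁_def]; linarith
  have hc₁b : Cq ≤ c₁ := by
    calc Cq ≤ max (q^2/2) Cq := le_max_right _ _
      _ ≤ c₁ := by rw [hc₁_def]; linarith
  -- Term 2 : H₁ * M ^ q
  have hterm2 : H₁ * M ^ q ≤ ε/2 * S^2 + q^2/2 * H₁^2 * ε⁻¹ * T^2 := by
    have h1 : H₁ * M ^ q ≤ H₁ * (q * S * T) :=
      mul_le_mul_of_nonneg_left hMq hH₁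
    have h2 : H₁ * (q * S * T) = S * (q * H₁ * T) := by ring
    have h3 := young2 (a := S) (b := q * H₁ * T) hε
    have h4 : (q * H₁ * T)^2/(2*ε) = q^2/2 * H₁^2 * ε⁻¹ * T^2 := by
      field_simp
    calc H₁ * M ^ q ≤ H₁ * (q * S * T) := h1
      _ = S * (q * H₁ * T) := h2
      _ ≤ ε/2 * S^2 + (q * H₁ * T)^2/(2*ε) := h3
      _ = ε/2 * S^2 + q^2/2 * H₁^2 * ε⁻¹ * T^2 := by rw [h4]
  -- Term 1 : H₀ * M ^ (q-1)
  have hMq1 : M ^ (q-1) ≤ (q*S*T) ^ θ := by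
    have h0 : M ^ (q-1) = (M ^ q) ^ θ := by
      rw [← Real.rpow_mul hM, show q * θ = q - 1 by rw [hθ_def]; field_simp]
    rw [h0]
    exact Real.rpow_le_rpow (Real.rpow_nonneg hM q) hMq hθ_pos.le
  have hterm1 : H₀ * M^(q-1) ≤ ε/2 * S^2 + Cq * H₀^p' * ε^(-r) * T^(θ*p') := by
    have hw := wyoung (a := S^θ) (b := H₀ * (q^θ * T^θ)) hconj (Real.rpow_nonneg hS θ)
      (mul_nonneg hH₀ (by positivity)) (by positivity : (0:ℝ) < ε/2)
    have i1 : (S^θ)^p = S^2 := by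
      rw [← Real.rpow_mul hS, show θ*p = (2:ℝ) by rw [hθ_def, hp_def]; field_simp,
        Real.rpow_two]
    have i2 : (H₀*(q^θ*T^θ))^p' = H₀^p' * (q^(θ*p') * T^(θ*p')) := by
      rw [Real.mul_rpow hH₀ (by positivity), Real.mul_rpow (by positivity) (by positivity),
        ← Real.rpow_mul hq0.le, ← Real.rpow_mul hT]
    have i3 : ((ε/2)*p)^(-(p'/p)) = (p/2)^(-r) * ε^(-r) := by
      rw [hrpp, show (ε/2)*p = ε*(p/2) by ring,
        Real.mul_rpow hε.le (by positivity), mul_comm]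
    have step1 : H₀ * M^(q-1) ≤ S^θ * (H₀*(q^θ*T^θ)) := by
      have h5 : H₀ * M^(q-1) ≤ H₀ * (q*S*T)^θ := mul_le_mul_of_nonneg_left hMq1 hH₀
      have h6 : (q*S*T)^θ = q^θ * S^θ * T^θ := by
        rw [Real.mul_rpow (mul_nonneg hq0.le hS) hT, Real.mul_rpow hq0.le hS]
      calc H₀ * M^(q-1) ≤ H₀ * (q*S*T)^θ := h5
        _ = S^θ * (H₀*(q^θ*T^θ)) := by rw [h6]; ring
    calc H₀ * M^(q-1) ≤ S^θ * (H₀*(q^θ*T^θ)) := step1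
      _ ≤ ε/2 * (S^θ)^p + ((ε/2)*p)^(-(p'/p))/p' * (H₀*(q^θ*T^θ))^p' := hw
      _ = ε/2 * S^2 + Cq * H₀^p' * ε^(-r) * T^(θ*p') := by
          rw [i1, i2, i3, hCq_def]; ring
  -- bound on T ^ (θ*p')
  have hTb : T^(θ*p') ≤ 1 + T^2 := by
    have hθp' : θ*p' = 2*r := by rw [hθ_def, hp'_def, hr_def]; field_simp
    have hr1 : r ≤ 1 := by
      rw [hr_def, div_le_one (by linarith)]; linarith
    rw [hθp', Real.rpow_mul hT, Real.rpow_two]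
    rcases le_or_gt (T^2) 1 with h|h
    · calc (T^2)^r ≤ 1 := Real.rpow_le_one (sq_nonneg T) h hr_pos.le
        _ ≤ 1 + T^2 := by nlinarith [sq_nonneg T]
    · calc (T^2)^r ≤ (T^2)^(1:ℝ) := Real.rpow_le_rpow_of_exponent_le h.le hr1
        _ = T^2 := Real.rpow_one _
        _ ≤ 1 + T^2 := by linarith
  -- combine
  have hεr : (0:ℝ) < ε^(-r) := Real.rpow_pos_of_pos hε _
  have hH₀p' : (0:ℝ) ≤ H₀^p' := Real.rpow_nonneg hH₀ _
  have e1 : Cq*H₀^p'*ε^(-r)*T^(θ*p') ≤ c₁*H₀^p'*ε^(-r)*(1+T^2) := by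
    have := mul_le_mul (mul_le_mul_of_nonneg_right (mul_le_mul_of_nonneg_right hc₁b hH₀p')
      hεr.le) hTb (Real.rpow_nonneg hT _) (by positivity)
    exact this
  have e2 : q^2/2*H₁^2*ε⁻¹*T^2 ≤ c₁*H₁^2*ε⁻¹*(1+T^2) := by
    have := mul_le_mul (mul_le_mul_of_nonneg_right (mul_le_mul_of_nonneg_right hc₁a
      (sq_nonneg H₁)) (inv_pos.mpr hε).le) (by linarith [sq_nonneg T] : T^2 ≤ 1+T^2)
      (sq_nonneg T) (by positivity)
    exact this
  have expand : ε*S^2 + c₁*(H₁^2*ε⁻¹ + H₀^p'*ε^(-r))*(1+T^2)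
      = ε/2*S^2 + ε/2*S^2 + c₁*H₀^p'*ε^(-r)*(1+T^2) + c₁*H₁^2*ε⁻¹*(1+T^2) := by ring
  have hgoal : L ≤ ε*S^2 + c₁*(H₁^2*ε⁻¹ + H₀^p'*ε^(-r))*(1+T^2) := by
    rw [expand]
    clear_value θ p p' r Cq c₁
    calc L ≤ H₀ * M^(q-1) + H₁ * M^q := hL
      _ ≤ (ε/2*S^2 + Cq*H₀^p'*ε^(-r)*T^(θ*p')) + (ε/2*S^2 + q^2/2*H₁^2*ε⁻¹*T^2) :=
          add_le_add hterm1 hterm2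
      _ ≤ ε/2*S^2 + ε/2*S^2 + c₁*H₀^p'*ε^(-r)*(1+T^2) + c₁*H₁^2*ε⁻¹*(1+T^2) := by
          linarith [e1, e2]
  have hexp : -(q-1)/(q+1) = -r := by rw [hr_def]; ring
  rw [hexp]
  exact hgoal

lemma sqrt_bound {q A B M : ℝ} (hq0 : 0 < q) (hA : 0 ≤ A) (hB : 0 ≤ B)
    (h : ∀ δ : ℝ, 0 < δ → M ^ q ≤ q/2 * (δ * A + δ⁻¹ * B)) :
    M ^ q ≤ q * Real.sqrt A * Real.sqrt B := by
  rcases eq_or_lt_of_le hA with hA0 | hA0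
  · have hle : M ^ q ≤ 0 := by
      by_contra hpos
      push_neg at hpos
      rcases eq_or_lt_of_le hB with hB0 | hB0
      · have := h 1 one_pos
        rw [← hA0, ← hB0] at this; simp at this; linarith
      · have hδ : 0 < q*B/M^q := by positivity
        have h2 := h _ hδ
        rw [← hA0] at h2
        have : q/2 * ((q*B/M^q) * 0 + (q*B/M^q)⁻¹ * B) = M^q/2 := by
          field_simp; ring
        rw [this] at h2; linarith
    calc M ^ q ≤ 0 := hle
      _ ≤ q * Real.sqrt A * Real.sqrt B := by positivity
  rcases eq_or_lt_of_le hB with hB0 | hB0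
  · have hle : M ^ q ≤ 0 := by
      by_contra hpos
      push_neg at hpos
      have hδ : 0 < M^q/(q*A) := by positivity
      have h2 := h _ hδ
      rw [← hB0] at h2
      have : q/2 * ((M^q/(q*A)) * A + (M^q/(q*A))⁻¹ * 0) = M^q/2 := by
        field_simp; ring
      rw [this] at h2; linarith
    calc M ^ q ≤ 0 := hle
      _ ≤ q * Real.sqrt A * Real.sqrt B := by positivity
  · have hsA : 0 < Real.sqrt A := Real.sqrt_pos.mpr hA0
    have hsB : 0 < Real.sqrt B := Real.sqrt_pos.mpr hB0
    have hA2 : Real.sqrt A ^ 2 = A := Real.sq_sqrt hA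
    have hB2 : Real.sqrt B ^ 2 = B := Real.sq_sqrt hB
    have hδ : 0 < Real.sqrt B / Real.sqrt A := by positivity
    have h2 := h _ hδ
    have : q/2 * ((Real.sqrt B / Real.sqrt A) * A + (Real.sqrt B / Real.sqrt A)⁻¹ * B)
        = q * Real.sqrt A * Real.sqrt B := by
      field_simp
      linear_combination (-(Real.sqrt B^2))*hA2 - (Real.sqrt A^2)*hB2
    rwa [this] at h2

lemma pointwise_young {q : ℝ} (hq : 2 ≤ q) {δ u v : ℝ} (hδ : 0 < δ) :
    q * |v| ^ (q-2) * v * u ≤ q/2 * (δ * (u^2 * |v|^(q-2)) + δ⁻¹ * |v|^q) := by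
  have hq0 : (0:ℝ) < q := by linarith
  set a := |v| with ha_def
  have ha : 0 ≤ a := abs_nonneg v
  set s : ℝ := a^((q-2)/2) with hs_def
  set t : ℝ := a^(q/2) with ht_def
  have hs0 : 0 ≤ s := Real.rpow_nonneg ha _
  have ht0 : 0 ≤ t := Real.rpow_nonneg ha _
  have hss : s * s = a^(q-2) := by
    rw [hs_def, ← Real.rpow_add_of_nonneg ha (by linarith) (by linarith)]
    norm_num
  have htt : t * t = a^q := by
    rw [ht_def, ← Real.rpow_add_of_nonneg ha (by linarith) (by linarith)]
    norm_num
  have hsa : s * a = t := by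
    rw [hs_def, ht_def]
    nth_rewrite 2 [← Real.rpow_one a]
    rw [← Real.rpow_add_of_nonneg ha (by linarith) zero_le_one]
    congr 1
    ring
  have e : |q * |v|^(q-2) * v * u| = q * a^(q-2) * a * |u| := by
    rw [abs_mul, abs_mul, abs_mul, abs_of_nonneg hq0.le,
      abs_of_nonneg (Real.rpow_nonneg ha _), ← ha_def]
  have h1 : q * |v|^(q-2) * v * u ≤ q * ((|u| * s) * t) := by
    calc q * |v|^(q-2) * v * u ≤ |q * |v|^(q-2) * v * u| := le_abs_self _
      _ = q * a^(q-2) * a * |u| := e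
      _ = q * ((|u| * s) * t) := by rw [← hsa, ← hss]; ring
  have h2 : (|u| * s) * t ≤ δ/2 * (|u| * s)^2 + t^2/(2*δ) := young2 hδ
  have h3 : (|u| * s)^2 = u^2 * a^(q-2) := by rw [mul_pow, sq_abs, pow_two s, hss]
  have h4 : t^2 = a^q := by rw [pow_two t, htt]
  calc q * |v|^(q-2) * v * u ≤ q * ((|u| * s) * t) := h1
    _ ≤ q * (δ/2 * (|u| * s)^2 + t^2/(2*δ)) := mul_le_mul_of_nonneg_left h2 hq0.le
    _ = q/2 * (δ * (u^2 * |v|^(q-2)) + δ⁻¹ * |v|^q) := by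
        rw [h3, h4, ← ha_def]; field_simp

lemma sign_mul_abs_rpow {q : ℝ} (hq : 2 ≤ q) (v : ℝ) :
    v * |v|^(q-2) = Real.sign v * |v|^(q-1) := by
  rcases lt_trichotomy v 0 with h|h|h
  · rw [Real.sign_of_neg h, abs_of_neg h]
    have : (-v)^(q-1) = (-v) * (-v)^(q-2) := by
      rw [show q-1 = 1 + (q-2) by ring,
        Real.rpow_add_of_nonneg (by linarith) zero_le_one (by linarith), Real.rpow_one]
    rw [this]; ring
  · rw [h]; simp
  · rw [Real.sign_of_pos h, abs_of_pos h]
    have : v^(q-1) = v * v^(q-2) := by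
      rw [show q-1 = 1 + (q-2) by ring,
        Real.rpow_add_of_nonneg h.le zero_le_one (by linarith), Real.rpow_one]
    rw [this]; ring

/-- For every `q ∈ [2,∞)` there is a constant `c₁(q) > 0` such that for
all `h₀, h₁ ∈ L¹((0,1);[0,∞))` and `φ` satisfying `φ(r,ξ) sign ξ ≤ h₀(r) + h₁(r)|ξ|`
(condition (Φ2)), every `ε > 0` and every `C¹` function `x : [0,1] → ℝ` vanishing at the
endpoints with `r ↦ φ(r,x r) x r |x r|^{q-2}` integrable:
`∫₀¹ φ(r,x r) x r |x r|^{q-2} dr ≤ ε ∫₀¹ x'(r)² |x r|^{q-2} dr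
  + c₁(q) (‖h₁‖₁² ε⁻¹ + ‖h₀‖₁^{2q/(q+1)} ε^{-(q-1)/(q+1)}) (1 + ‖x‖_q^q)`. -/
theorem integral_drift_pairing_pow_le (q : ℝ) (hq : 2 ≤ q) :
    ∃ c₁ : ℝ, 0 < c₁ ∧
      ∀ (h₀ h₁ : ℝ → ℝ),
        IntegrableOn h₀ (Ioo (0:ℝ) 1) volume →
        IntegrableOn h₁ (Ioo (0:ℝ) 1) volume →
        (∀ r ∈ Ioo (0:ℝ) 1, 0 ≤ h₀ r) → (∀ r ∈ Ioo (0:ℝ) 1, 0 ≤ h₁ r) →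
        ∀ (φ : ℝ → ℝ → ℝ),
          (∀ ξ : ℝ, Measurable fun r => φ r ξ) →
          (∀ r ∈ Ioo (0:ℝ) 1, Continuous (φ r)) →
          (∀ᵐ r ∂(volume.restrict (Ioo (0:ℝ) 1)), ∀ ξ : ℝ,
            φ r ξ * Real.sign ξ ≤ h₀ r + h₁ r * |ξ|) →
          ∀ (ε : ℝ), 0 < ε →
            ∀ (x x' : ℝ → ℝ),
              (∀ r ∈ Icc (0:ℝ) 1, HasDerivWithinAt x (x' r) (Icc (0:ℝ) 1) r) →
              ContinuousOn x' (Icc (0:ℝ) 1) →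
              x 0 = 0 → x 1 = 0 →
              IntegrableOn (fun r => φ r (x r) * (x r * |x r| ^ (q - 2)))
                (Ioo (0:ℝ) 1) volume →
              ∫ r in Ioo (0:ℝ) 1, φ r (x r) * (x r * |x r| ^ (q - 2)) ≤
                ε * (∫ r in Ioo (0:ℝ) 1, (x' r) ^ 2 * |x r| ^ (q - 2))
                  + c₁ * ((∫ r in Ioo (0:ℝ) 1, h₁ r) ^ 2 * ε⁻¹
                      + (∫ r in Ioo (0:ℝ) 1, h₀ r) ^ (2 * q / (q + 1))
                          * ε ^ (-(q - 1) / (q + 1)))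
                    * (1 + ∫ r in Ioo (0:ℝ) 1, |x r| ^ q) := by
  obtain ⟨c₁, hc₁, key⟩ := scalar_key q hq
  refine ⟨c₁, hc₁, ?_⟩
  intro h₀ h₁ hi₀ hi₁ hnn₀ hnn₁ φ hφm hφc hΦ ε hε x x' hder hx'c hx0 hx1 hint
  have hq0 : (0:ℝ) < q := by linarith
  have hq1 : (1:ℝ) < q := by linarith
  -- continuity facts
  have hxc : ContinuousOn x (Icc (0:ℝ) 1) := fun r hr => (hder r hr).continuousWithinAt
  have hcontabs2 : Continuous fun t : ℝ => |t| ^ (q-2) := by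
    rw [continuous_iff_continuousAt]
    intro t
    exact (Real.continuousAt_rpow_const _ _ (Or.inr (by linarith))).comp
      continuous_abs.continuousAt
  have hcontabsq : Continuous fun t : ℝ => |t| ^ q := by
    rw [continuous_iff_continuousAt]
    intro t
    exact (Real.continuousAt_rpow_const _ _ (Or.inr hq0.le)).comp continuous_abs.continuousAt
  have hAc : ContinuousOn (fun r => (x' r)^2 * |x r| ^ (q-2)) (Icc (0:ℝ) 1) :=
    (hx'c.pow 2).mul (hcontabs2.comp_continuousOn hxc)
  have hBc : ContinuousOn (fun r => |x r| ^ q) (Icc (0:ℝ) 1) :=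
    hcontabsq.comp_continuousOn hxc
  have hAint : IntegrableOn (fun r => (x' r)^2 * |x r| ^ (q-2)) (Ioo (0:ℝ) 1) volume :=
    (hAc.integrableOn_Icc).mono_set Ioo_subset_Icc_self
  have hBint : IntegrableOn (fun r => |x r| ^ q) (Ioo (0:ℝ) 1) volume :=
    (hBc.integrableOn_Icc).mono_set Ioo_subset_Icc_self
  set A := ∫ r in Ioo (0:ℝ) 1, (x' r)^2 * |x r| ^ (q-2) with hA_def
  set B := ∫ r in Ioo (0:ℝ) 1, |x r| ^ q with hB_def
  have hA0 : 0 ≤ A := setIntegral_nonneg measurableSet_Ioo (fun r _ => by positivity)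
  have hB0 : 0 ≤ B := setIntegral_nonneg measurableSet_Ioo (fun r _ => by positivity)
  -- maximum of |x|
  obtain ⟨r₀, hr₀, hmax⟩ := isCompact_Icc.exists_isMaxOn (nonempty_Icc.mpr zero_le_one)
    (continuous_abs.comp_continuousOn hxc)
  set M := |x r₀| with hM_def
  have hM0 : 0 ≤ M := abs_nonneg _
  -- the key estimate (*)
  have star : ∀ δ : ℝ, 0 < δ → M ^ q ≤ q/2 * (δ * A + δ⁻¹ * B) := by
    intro δ hδ
    have hderivF : ∀ t ∈ Ioo (0:ℝ) r₀, HasDerivWithinAt (fun r => |x r| ^ q)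
        (q * |x t| ^ (q-2) * x t * x' t) (Ioi t) t := by
      intro t ht
      have ht1 : t ∈ Ioo (0:ℝ) 1 := ⟨ht.1, lt_of_lt_of_le ht.2 hr₀.2⟩
      have hxt : HasDerivAt x (x' t) t :=
        (hder t (Ioo_subset_Icc_self ht1)).hasDerivAt (Icc_mem_nhds ht1.1 ht1.2)
      have := (hasDerivAt_abs_rpow (x t) hq1).comp t hxt
      exact this.hasDerivWithinAt
    have hcontF : ContinuousOn (fun r => |x r| ^ q) (Icc 0 r₀) :=
      hBc.mono (Icc_subset_Icc le_rfl hr₀.2)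
    have hF'c : ContinuousOn (fun t => q * |x t| ^ (q-2) * x t * x' t) (Icc (0:ℝ) 1) :=
      ((continuousOn_const.mul (hcontabs2.comp_continuousOn hxc)).mul hxc).mul hx'c
    have hintF' : IntervalIntegrable (fun t => q * |x t| ^ (q-2) * x t * x' t) volume 0 r₀ := by
      apply ContinuousOn.intervalIntegrable
      rw [uIcc_of_le hr₀.1]
      exact hF'c.mono (Icc_subset_Icc le_rfl hr₀.2)
    have hFTC := intervalIntegral.integral_eq_sub_of_hasDeriv_right_of_le hr₀.1 hcontF
      hderivF hintF'
    rw [hx0, abs_zero, Real.zero_rpow hq0.ne'] at hFTC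
    set G := fun t => q/2 * (δ * ((x' t)^2 * |x t| ^ (q-2)) + δ⁻¹ * |x t| ^ q) with hG_def
    have hGc : ContinuousOn G (Icc (0:ℝ) 1) :=
      continuousOn_const.mul ((continuousOn_const.mul hAc).add (continuousOn_const.mul hBc))
    have hGnn : ∀ t, 0 ≤ G t := by
      intro t
      apply mul_nonneg (by positivity)
      exact add_nonneg (mul_nonneg hδ.le (by positivity))
        (mul_nonneg (inv_nonneg.mpr hδ.le) (by positivity))
    have hGint : IntegrableOn G (Ioo (0:ℝ) 1) volume :=
      (hGc.integrableOn_Icc).mono_set Ioo_subset_Icc_self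
    have hGint' : IntegrableOn G (Ioc (0:ℝ) r₀) volume :=
      (hGc.integrableOn_Icc).mono_set (fun t ht => ⟨ht.1.le, le_trans ht.2 hr₀.2⟩)
    have hF'int : IntegrableOn (fun t => q * |x t| ^ (q-2) * x t * x' t) (Ioc (0:ℝ) r₀)
        volume := by
      apply (hF'c.integrableOn_Icc).mono_set
      exact fun t ht => ⟨ht.1.le, le_trans ht.2 hr₀.2⟩
    have hstep1 : ∫ t in Ioc (0:ℝ) r₀, q * |x t| ^ (q-2) * x t * x' t
        ≤ ∫ t in Ioc (0:ℝ) r₀, G t := by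
      apply setIntegral_mono_on hF'int hGint' measurableSet_Ioc
      intro t _
      exact pointwise_young hq hδ
    have hstep2 : ∫ t in Ioc (0:ℝ) r₀, G t ≤ ∫ t in Ioo (0:ℝ) 1, G t := by
      apply setIntegral_mono_set hGint (Filter.Eventually.of_forall hGnn)
      rw [ae_le_set]
      refine measure_mono_null ?_ (measure_singleton (1:ℝ))
      rintro t ⟨⟨ht0, htr⟩, hn⟩
      simp only [mem_Ioo, not_and, not_lt, mem_singleton_iff] at hn ⊢
      exact le_antisymm (le_trans htr hr₀.2) (hn ht0)
    have hstep3 : ∫ t in Ioo (0:ℝ) 1, G t = q/2 * (δ * A + δ⁻¹ * B) := by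
      rw [hG_def]
      have : (fun t => q/2 * (δ * ((x' t)^2 * |x t| ^ (q-2)) + δ⁻¹ * |x t| ^ q))
          = fun t => (q/2*δ) * ((x' t)^2 * |x t| ^ (q-2)) + (q/2*δ⁻¹) * (|x t| ^ q) := by
        funext t; ring
      rw [this, integral_add (hAint.const_mul _) (hBint.const_mul _),
        integral_const_mul, integral_const_mul, ← hA_def, ← hB_def]
      ring
    calc M ^ q = ∫ t in (0:ℝ)..r₀, q * |x t| ^ (q-2) * x t * x' t := by
          rw [hFTC, hM_def, sub_zero]
      _ = ∫ t in Ioc (0:ℝ) r₀, q * |x t| ^ (q-2) * x t * x' t :=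
          intervalIntegral.integral_of_le hr₀.1
      _ ≤ ∫ t in Ioc (0:ℝ) r₀, G t := hstep1
      _ ≤ ∫ t in Ioo (0:ℝ) 1, G t := hstep2
      _ = q/2 * (δ * A + δ⁻¹ * B) := hstep3
  have hMqST : M ^ q ≤ q * Real.sqrt A * Real.sqrt B := sqrt_bound hq0 hA0 hB0 star
  -- bound on the left-hand side
  set H₀ := ∫ r in Ioo (0:ℝ) 1, h₀ r with hH₀_def
  set H₁ := ∫ r in Ioo (0:ℝ) 1, h₁ r with hH₁_def
  have hH₀0 : 0 ≤ H₀ := setIntegral_nonneg measurableSet_Ioo hnn₀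
  have hH₁0 : 0 ≤ H₁ := setIntegral_nonneg measurableSet_Ioo hnn₁
  have hRHSint : IntegrableOn (fun r => h₀ r * M ^ (q-1) + h₁ r * M ^ q) (Ioo (0:ℝ) 1)
      volume := (hi₀.mul_const _).add (hi₁.mul_const _)
  have hptwise : ∀ᵐ r ∂(volume.restrict (Ioo (0:ℝ) 1)),
      φ r (x r) * (x r * |x r| ^ (q-2)) ≤ h₀ r * M ^ (q-1) + h₁ r * M ^ q := by
    filter_upwards [hΦ, ae_restrict_mem measurableSet_Ioo] with r hφr hr
    have hxM : |x r| ≤ M := hmax (Ioo_subset_Icc_self hr)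
    have habs : |x r| ^ q = |x r| * |x r| ^ (q-1) := by
      have h := Real.rpow_add_of_nonneg (abs_nonneg (x r)) zero_le_one
        (by linarith : (0:ℝ) ≤ q-1)
      rw [Real.rpow_one] at h
      rw [show (1:ℝ)+(q-1) = q by ring] at h
      exact h
    calc φ r (x r) * (x r * |x r| ^ (q-2))
        = (φ r (x r) * Real.sign (x r)) * |x r| ^ (q-1) := by
          rw [sign_mul_abs_rpow hq (x r)]; ring
      _ ≤ (h₀ r + h₁ r * |x r|) * |x r| ^ (q-1) :=
          mul_le_mul_of_nonneg_right (hφr (x r)) (Real.rpow_nonneg (abs_nonneg _) _)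
      _ = h₀ r * |x r| ^ (q-1) + h₁ r * (|x r| * |x r| ^ (q-1)) := by ring
      _ ≤ h₀ r * M ^ (q-1) + h₁ r * M ^ q := by
          apply add_le_add
          · exact mul_le_mul_of_nonneg_left
              (Real.rpow_le_rpow (abs_nonneg _) hxM (by linarith)) (hnn₀ r hr)
          · rw [← habs]
            exact mul_le_mul_of_nonneg_left
              (Real.rpow_le_rpow (abs_nonneg _) hxM hq0.le) (hnn₁ r hr)
  have hLHS : ∫ r in Ioo (0:ℝ) 1, φ r (x r) * (x r * |x r| ^ (q - 2))
      ≤ H₀ * M ^ (q-1) + H₁ * M ^ q := by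
    calc ∫ r in Ioo (0:ℝ) 1, φ r (x r) * (x r * |x r| ^ (q - 2))
        ≤ ∫ r in Ioo (0:ℝ) 1, (h₀ r * M ^ (q-1) + h₁ r * M ^ q) :=
          integral_mono_ae hint hRHSint hptwise
      _ = H₀ * M ^ (q-1) + H₁ * M ^ q := by
          rw [integral_add (hi₀.mul_const _) (hi₁.mul_const _),
            integral_mul_const, integral_mul_const]
  have final := key ε (Real.sqrt A) (Real.sqrt B) H₀ H₁ M
    (∫ r in Ioo (0:ℝ) 1, φ r (x r) * (x r * |x r| ^ (q - 2))) hε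
    (Real.sqrt_nonneg _) (Real.sqrt_nonneg _) hH₀0 hH₁0 hM0 hMqST hLHS
  rw [Real.sq_sqrt hA0, Real.sq_sqrt hB0] at final
  exact final
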